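/- Let D be an integrally closed domain with fraction field K, B a finite-dimensional K-algebra, b ∈ B with minimal polynomial μ_b ∈ K[X], and f ∈ K[X]. Then the set of roots (in a fixed algebraic closure of K) of the minimal polynomial of f(b) equals the image under f of the set of roots of μ_b. -/

import Mathlib

open Polynomial TensorProduct

/-- Linear independence is preserved by base change (elementary tensors with `1`). -/
lemma aux_tmul_linearIndependent {K L B : Type*} [Field K] [Field L] [Algebra K L]
    [AddCommGroup B] [Module K B] {n : ℕ} {v : Fin n → B}
    (hv : LinearIndependent K v) :
    LinearIndependent L (fun i : Fin n => ((1 : L) ⊗ₜ[K] v i : L ⊗[K] B)) := by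
  classical
  set p := Submodule.span K (Set.range v)
  let sb : Module.Basis (Fin n) K p := Module.Basis.span hv
  obtain ⟨q, hq⟩ := Submodule.exists_isCompl p
  let π : B →ₗ[K] p := Submodule.linearProjOfIsCompl p q hq
  rw [Fintype.linearIndependent_iff]
  intro g hg i
  let ψ : B →ₗ[K] K := (sb.coord i).comp π
  let Φ : (L ⊗[K] B) →ₗ[L] L :=
    (TensorProduct.AlgebraTensorModule.rid K L L).toLinearMap.comp (ψ.baseChange L)
  have hΦ : ∀ j, Φ ((1 : L) ⊗ₜ[K] v j) = algebraMap K L (if i = j then 1 else 0) := by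
    intro j
    have hvj : v j ∈ p := Submodule.subset_span (Set.mem_range_self j)
    have hπ : π (v j) = ⟨v j, hvj⟩ := Submodule.linearProjOfIsCompl_apply_left hq ⟨v j, hvj⟩
    have hsb : (⟨v j, hvj⟩ : p) = sb j := by
      ext
      rw [Module.Basis.span_apply]
    have : ψ (v j) = if i = j then 1 else 0 := by
      simp only [ψ, LinearMap.comp_apply, hπ, hsb, Module.Basis.coord_apply, Module.Basis.repr_self]
      simp [Finsupp.single_apply, eq_comm]
    simp only [Φ, LinearMap.comp_apply, LinearMap.baseChange_tmul, this,
      LinearEquiv.coe_coe, TensorProduct.AlgebraTensorModule.rid_tmul]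
    rw [Algebra.smul_def, mul_one]
  have := congrArg Φ hg
  simp only [map_sum, map_zero, LinearMap.map_smul, hΦ] at this
  have hzero : ∑ j, g j * algebraMap K L (if i = j then 1 else 0) = 0 := by
    simpa [smul_eq_mul] using this
  rw [Finset.sum_eq_single i] at hzero
  · simpa using hzero
  · intro j _ hj
    simp [Ne.symm hj]
  · simp

/-- The minimal polynomial of `1 ⊗ b` after a base field extension is the image of
the minimal polynomial. -/
lemma aux_minpoly_baseChange {K B : Type*} [Field K] [Ring B] [Algebra K B]
    (L : Type*) [Field L] [Algebra K L] (b : B) (hb : IsIntegral K b) :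
    minpoly L ((1 : L) ⊗ₜ[K] b : L ⊗[K] B) = (minpoly K b).map (algebraMap K L) := by
  have h0 : aeval ((1 : L) ⊗ₜ[K] b : L ⊗[K] B) ((minpoly K b).map (algebraMap K L)) = 0 := by
    rw [aeval_map_algebraMap]
    have h1 : ((1 : L) ⊗ₜ[K] b : L ⊗[K] B) = Algebra.TensorProduct.includeRight b := rfl
    rw [h1, Polynomial.aeval_algHom_apply, minpoly.aeval, map_zero]
  refine (minpoly.unique L _ ((minpoly.monic hb).map _) h0 ?_).symm
  intro q hqm hq
  by_contra hlt
  push_neg at hlt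
  have hqd : q.natDegree < (minpoly K b).natDegree := by
    have := Polynomial.natDegree_lt_natDegree hqm.ne_zero hlt
    simpa using this
  set d := (minpoly K b).natDegree with hd
  have hsum : ∑ i : Fin d, q.coeff (i : ℕ) • ((1 : L) ⊗ₜ[K] b : L ⊗[K] B) ^ (i : ℕ) = 0 := by
    rw [Fin.sum_univ_eq_sum_range (fun i => q.coeff i • ((1 : L) ⊗ₜ[K] b : L ⊗[K] B) ^ i)]
    rw [← Polynomial.aeval_eq_sum_range' hqd]
    exact hq
  have hind : LinearIndependent L (fun i : Fin d => ((1 : L) ⊗ₜ[K] b : L ⊗[K] B) ^ (i : ℕ)) := by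
    have h1 : LinearIndependent K (fun i : Fin d => b ^ (i : ℕ)) := linearIndependent_pow b
    have h2 := aux_tmul_linearIndependent (L := L) h1
    have h3 : (fun i : Fin d => ((1 : L) ⊗ₜ[K] b : L ⊗[K] B) ^ (i : ℕ))
        = fun i : Fin d => ((1 : L) ⊗ₜ[K] (b ^ (i : ℕ)) : L ⊗[K] B) := by
      funext i
      rw [Algebra.TensorProduct.tmul_pow, one_pow]
    rw [h3]
    exact h2
  have hcoeff := Fintype.linearIndependent_iff.mp hind (fun i => q.coeff (i : ℕ)) hsum
    ⟨q.natDegree, hqd⟩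
  simp only [Polynomial.Monic.coeff_natDegree hqm] at hcoeff
  exact one_ne_zero hcoeff

/-- In a finite-dimensional algebra over a field, the spectrum equals the set of roots of
the minimal polynomial. -/
lemma aux_spectrum_eq_minpoly_roots {F A : Type*} [Field F] [Ring A] [Algebra F A]
    [FiniteDimensional F A] (a : A) :
    spectrum F a = {x : F | (minpoly F a).IsRoot x} := by
  have hm : minpoly F (Algebra.lmul F A a) = minpoly F a :=
    minpoly.algHom_eq (Algebra.lmul F A) Algebra.lmul_injective a
  ext x
  rw [Set.mem_setOf_eq, ← hm, ← Module.End.hasEigenvalue_iff_isRoot,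
    Module.End.hasEigenvalue_iff_mem_spectrum, spectrum.mem_iff, spectrum.mem_iff]
  have : (algebraMap F (Module.End F A)) x - Algebra.lmul F A a
      = Algebra.lmul F A ((algebraMap F A) x - a) := by
    rw [map_sub, AlgHom.commutes]
  rw [this, Algebra.lmul_isUnit_iff]

/-- Let `D` be an integrally closed domain with fraction field `K`, `B` a finite-dimensional
`K`-algebra, `b ∈ B`, and `f ∈ K[X]`.  Then the set of roots, in an algebraic closure of
`K`, of the minimal polynomial of `f(b)` equals the image under `f` of the set of roots of
the minimal polynomial of `b`. -/
theorem stmt_16 {D K B : Type*} [CommRing D] [IsDomain D] [IsIntegrallyClosed D]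
    [Field K] [Algebra D K] [IsFractionRing D K]
    [Ring B] [Algebra K B] [FiniteDimensional K B]
    (b : B) (f : Polynomial K) :
    {x : AlgebraicClosure K | Polynomial.aeval x (minpoly K (Polynomial.aeval b f)) = 0}
      = (fun x : AlgebraicClosure K => Polynomial.aeval x f) ''
          {x : AlgebraicClosure K | Polynomial.aeval x (minpoly K b) = 0} := by
  classical
  set L := AlgebraicClosure K
  rcases subsingleton_or_nontrivial B with hB | hB
  · -- trivial algebra: both minpolys are 1, both sides empty
    have hone : ∀ y : B, minpoly K y = 1 := by
      intro y
      have hdvd : (minpoly K y) ∣ 1 := minpoly.dvd K y (Subsingleton.elim _ _)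
      have hint : IsIntegral K y := ⟨Polynomial.X, Polynomial.monic_X, Subsingleton.elim _ _⟩
      exact (minpoly.monic hint).isUnit_iff.mp (isUnit_of_dvd_one hdvd)
    have h2 : {x : L | Polynomial.aeval x (minpoly K (Polynomial.aeval b f)) = 0} = ∅ := by
      ext x
      simp [hone]
    have h3 : {x : L | Polynomial.aeval x (minpoly K b) = 0} = ∅ := by
      ext x
      simp [hone]
    rw [h2, h3, Set.image_empty]
  · have hbint : IsIntegral K b := Algebra.IsIntegral.isIntegral b
    have hfbint : IsIntegral K (aeval b f) := Algebra.IsIntegral.isIntegral _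
    haveI : Nontrivial (L ⊗[K] B) := Module.FaithfullyFlat.lTensor_nontrivial (R := K) (M := L) B
    set c : L ⊗[K] B := (1 : L) ⊗ₜ[K] b with hc
    have hmb : minpoly L c = (minpoly K b).map (algebraMap K L) :=
      aux_minpoly_baseChange L b hbint
    have hkey : ((1 : L) ⊗ₜ[K] (aeval b f) : L ⊗[K] B) = aeval c (f.map (algebraMap K L)) := by
      rw [aeval_map_algebraMap]
      exact (Polynomial.aeval_algHom_apply (Algebra.TensorProduct.includeRight (R := K) (A := L) (B := B)) b f).symm
    have hmfb : minpoly L (aeval c (f.map (algebraMap K L)))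
        = (minpoly K (aeval b f)).map (algebraMap K L) := by
      rw [← hkey]
      exact aux_minpoly_baseChange L _ hfbint
    have hspecc : spectrum L c = {x : L | aeval x (minpoly K b) = 0} := by
      rw [aux_spectrum_eq_minpoly_roots, hmb]
      ext x
      simp [Polynomial.IsRoot, Polynomial.eval_map, Polynomial.aeval_def]
    have hnon : (spectrum L c).Nonempty := by
      rw [hspecc]
      have hdeg : ((minpoly K b).map (algebraMap K L)).degree ≠ 0 := by
        rw [Polynomial.degree_map]
        exact (minpoly.degree_pos hbint).ne'
      obtain ⟨x, hx⟩ := IsAlgClosed.exists_root _ hdeg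
      refine ⟨x, ?_⟩
      simpa [Polynomial.IsRoot, Polynomial.eval_map, Polynomial.aeval_def] using hx
    have hmap := spectrum.map_polynomial_aeval_of_nonempty c (f.map (algebraMap K L)) hnon
    have hlhs : {x : L | aeval x (minpoly K (aeval b f)) = 0}
        = spectrum L (aeval c (f.map (algebraMap K L))) := by
      rw [aux_spectrum_eq_minpoly_roots, hmfb]
      ext x
      simp [Polynomial.IsRoot, Polynomial.eval_map, Polynomial.aeval_def]
    rw [hlhs, hmap, hspecc]
    ext y
    simp only [Set.mem_image]
    constructor
    · rintro ⟨x, hx, rfl⟩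
      exact ⟨x, hx, by simp [Polynomial.eval_map, Polynomial.aeval_def]; rfl⟩
    · rintro ⟨x, hx, rfl⟩
      exact ⟨x, hx, by simp [Polynomial.eval_map, Polynomial.aeval_def]; rfl⟩
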